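/- For every integer k ≥ 1 and every i with 1 ≤ i ≤ 2^k − 1, the identity [y_0, y_(2^k − i)]^(−1) = [y_0, y_i] holds in G_k. -/

import Mathlib

open Subgroup

namespace P2G

/-- The commutator `[a,b] = a⁻¹ b⁻¹ a b` (left-normed convention of the paper). -/
def comm {M : Type*} [Group M] (a b : M) : M := a⁻¹ * b⁻¹ * a * b

def X : FreeGroup (Fin 2) := FreeGroup.of 0
def Y : FreeGroup (Fin 2) := FreeGroup.of 1

/-- `y_j = x^(-j) y x^j` in the free group. -/
def yF (j : ℤ) : FreeGroup (Fin 2) := X ^ (-j) * Y * X ^ j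

/-- Relations for `G_k`:
`x^(2^(k+1)) = y^4 = [x^(2^k), y] = [y^2, x] = 1` and
`[y_0,y_i]^2 = [y_0,y_i,x] = [y_0,y_i,y] = 1` for `1 ≤ i ≤ 2^(k-1)`. -/
def rels (k : ℕ) : Set (FreeGroup (Fin 2)) :=
  {X ^ 2 ^ (k + 1), Y ^ 4, comm (X ^ 2 ^ k) Y, comm (Y ^ 2) X} ∪
    ⋃ i ∈ Set.Icc 1 (2 ^ (k - 1)),
      {comm (yF 0) (yF i) ^ 2, comm (comm (yF 0) (yF i)) X, comm (comm (yF 0) (yF i)) Y}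

/-- The group `G_k`, given by the above presentation. -/
abbrev G (k : ℕ) := PresentedGroup (rels k)

/-- The generator `x` of `G_k`. -/
def x (k : ℕ) : G k := PresentedGroup.of 0

/-- The generator `y` of `G_k`. -/
def y (k : ℕ) : G k := PresentedGroup.of 1

/-- `y_j = x^(-j) y x^j` in `G_k`. -/
def yg (k : ℕ) (j : ℤ) : G k := x k ^ (-j) * y k * x k ^ j

/-- `H_k`, the normal closure of `y` in `G_k`. -/
def Hsub (k : ℕ) : Subgroup (G k) := Subgroup.normalClosure {y k}

/-- `Z_k`, the normal closure in `G_k` of `{x^(2^k), y^2} ∪ {[y_0,y_i] : 1 ≤ i ≤ 2^(k-1)}`. -/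
def Zsub (k : ℕ) : Subgroup (G k) :=
  Subgroup.normalClosure ({x k ^ 2 ^ k, y k ^ 2} ∪
    {g | ∃ i : ℕ, 1 ≤ i ∧ i ≤ 2 ^ (k - 1) ∧ g = comm (yg k 0) (yg k i)})

/-- `G_k^(2^j)`, the subgroup generated by all `2^j`-th powers of elements of `G_k`. -/
def pow2 (k j : ℕ) : Subgroup (G k) := Subgroup.closure (Set.range fun g : G k => g ^ 2 ^ j)

/-- `w = y_(2^k − 1) y_(2^k − 2) ⋯ y_1 y_0` in `G_k`. -/
def w (k : ℕ) : G k := (((List.range (2 ^ k)).reverse).map fun j => yg k j).prod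

/-- The left-normed commutator `c k i = [y, x, …(i copies of x)…, x]`; `c k 0 = y`. -/
def c (k : ℕ) : ℕ → G k
  | 0 => y k
  | i + 1 => comm (c k i) (x k)

/-- `γ_m(G_k)`, the `m`-th term of the lower central series (`γ_1 = G_k`). -/
abbrev gamma (k m : ℕ) : Subgroup (G k) := (⊤ : Subgroup (G k)).lowerCentralSeries (m - 1)

/-- The canonical projection from the free group onto `G_k`. -/
def π (k : ℕ) : FreeGroup (Fin 2) →* G k :=
  QuotientGroup.mk' (Subgroup.normalClosure (rels k))

lemma π_rel (k : ℕ) {r : FreeGroup (Fin 2)} (hr : r ∈ rels k) : π k r = 1 :=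
  (QuotientGroup.eq_one_iff r).mpr (Subgroup.subset_normalClosure hr)

lemma π_X (k : ℕ) : π k X = x k := rfl

lemma π_Y (k : ℕ) : π k Y = y k := rfl

lemma map_comm {M N : Type*} [Group M] [Group N] (f : M →* N) (a b : M) :
    f (comm a b) = comm (f a) (f b) := by
  simp [comm]

lemma π_yF (k : ℕ) (j : ℤ) : π k (yF j) = yg k j := by
  simp [yF, yg, map_zpow, π_X, π_Y]

lemma commute_of_comm {M : Type*} [Group M] {a b : M} (h : comm a b = 1) :
    Commute a b := by
  unfold comm at h
  rw [Commute, SemiconjBy]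
  calc a * b = b * a * (a⁻¹ * b⁻¹ * a * b) := by group
    _ = b * a := by rw [h]; group

/-- `x^(2^k)` commutes with `y` in `G_k`. -/
lemma commute_x2k_y (k : ℕ) : Commute (x k ^ 2 ^ k) (y k) := by
  have hr : comm (X ^ 2 ^ k) Y ∈ rels k := by
    apply Set.mem_union_left
    simp [Set.mem_insert_iff]
  have := π_rel k hr
  rw [map_comm, map_pow, π_X, π_Y] at this
  exact commute_of_comm this

/-- For `1 ≤ n ≤ 2^(k-1)`, the commutator `[y_0, y_n]` commutes with `x`. -/
lemma commute_comm_x (k : ℕ) (n : ℤ) (hn1 : 1 ≤ n) (hn2 : n ≤ 2 ^ (k - 1)) :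
    Commute (comm (yg k 0) (yg k n)) (x k) := by
  have hr : comm (comm (yF 0) (yF n)) X ∈ rels k := by
    apply Set.mem_union_right
    refine Set.mem_biUnion (show n ∈ Set.Icc (1 : ℤ) (2 ^ (k - 1)) from Set.mem_Icc.mpr ⟨hn1, hn2⟩) ?_
    simp [Set.mem_insert_iff]
  have := π_rel k hr
  rw [map_comm, map_comm, π_X, π_yF, π_yF] at this
  exact commute_of_comm this

lemma yg_shift (k : ℕ) (i : ℤ) : yg k ((2 : ℤ) ^ k - i) = yg k (-i) := by
  have hc : x k ^ ((2 : ℤ) ^ k) * y k = y k * x k ^ ((2 : ℤ) ^ k) := by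
    have := commute_x2k_y k
    rw [Commute, SemiconjBy] at this
    have h2 : ((2 : ℤ) ^ k) = ((2 ^ k : ℕ) : ℤ) := by push_cast; ring
    rw [h2, zpow_natCast]
    exact this
  have key : x k ^ (-(2 : ℤ) ^ k) * y k * x k ^ ((2 : ℤ) ^ k) = y k := by
    calc x k ^ (-(2 : ℤ) ^ k) * y k * x k ^ ((2 : ℤ) ^ k)
        = x k ^ (-(2 : ℤ) ^ k) * (y k * x k ^ ((2 : ℤ) ^ k)) := by group
      _ = x k ^ (-(2 : ℤ) ^ k) * (x k ^ ((2 : ℤ) ^ k) * y k) := by rw [← hc]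
      _ = y k := by group
  unfold yg
  have e1 : x k ^ (-((2 : ℤ) ^ k - i)) = x k ^ i * x k ^ (-(2 : ℤ) ^ k) := by
    rw [← zpow_add]; ring_nf
  have e2 : x k ^ ((2 : ℤ) ^ k - i) = x k ^ ((2 : ℤ) ^ k) * x k ^ (-i) := by
    rw [← zpow_add]; ring_nf
  rw [e1, e2]
  calc x k ^ i * x k ^ (-(2:ℤ)^k) * y k * (x k ^ ((2:ℤ)^k) * x k ^ (-i))
      = x k ^ i * (x k ^ (-(2:ℤ)^k) * y k * x k ^ ((2:ℤ)^k)) * x k ^ (-i) := by group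
    _ = x k ^ i * y k * x k ^ (-i) := by rw [key]
    _ = x k ^ (-(-i)) * y k * x k ^ (-i) := by group

lemma comm_conj (k : ℕ) (i : ℤ) :
    comm (yg k 0) (yg k (-i)) = x k ^ i * comm (yg k i) (yg k 0) * (x k ^ i)⁻¹ := by
  simp only [comm, yg]
  group

lemma comm_swap {M : Type*} [Group M] (a b : M) : comm b a = (comm a b)⁻¹ := by
  simp [comm, mul_assoc]

/-- Main computation for `1 ≤ i ≤ 2^(k-1)`. -/
lemma main_case (k : ℕ) (i : ℤ) (h1 : 1 ≤ i) (h2 : i ≤ 2 ^ (k - 1)) :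
    comm (yg k 0) (yg k (2 ^ k - i)) = (comm (yg k 0) (yg k i))⁻¹ := by
  set cc := comm (yg k 0) (yg k i) with hcc
  have hcomm : Commute cc (x k) := commute_comm_x k i h1 h2
  have hcomm2 : Commute cc⁻¹ (x k ^ i) := (hcomm.zpow_right i).inv_left
  rw [yg_shift, comm_conj, comm_swap, ← hcc]
  rw [Commute, SemiconjBy] at hcomm2
  calc x k ^ i * cc⁻¹ * (x k ^ i)⁻¹ = cc⁻¹ * x k ^ i * (x k ^ i)⁻¹ := by
        rw [← hcomm2]
    _ = cc⁻¹ := by group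

/-- For every `k ≥ 1` and every `i` with `1 ≤ i ≤ 2^k − 1`, the identity
`[y_0, y_(2^k − i)]⁻¹ = [y_0, y_i]` holds in `G_k`. -/
theorem stmt3 (k : ℕ) (hk : 1 ≤ k) (i : ℤ) (h1 : 1 ≤ i) (h2 : i ≤ 2 ^ k - 1) :
    (comm (yg k 0) (yg k (2 ^ k - i)))⁻¹ = comm (yg k 0) (yg k i) := by
  have hpow : (2 : ℤ) ^ k = 2 * 2 ^ (k - 1) := by
    rw [← pow_succ']
    congr 1
    omega
  by_cases hcase : i ≤ 2 ^ (k - 1)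
  · rw [main_case k i h1 hcase, inv_inv]
  · set i' : ℤ := 2 ^ k - i with hi'
    have h1' : 1 ≤ i' := by omega
    have h2' : i' ≤ 2 ^ (k - 1) := by omega
    have := main_case k i' h1' h2'
    have hii : (2 : ℤ) ^ k - i' = i := by omega
    rw [hii] at this
    rw [this]

end P2G
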